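/- Let d ≥ 2 and for s,t ≥ 0 with s ≤ t define D(s,t) = |∫_{e^{-(t-s)}}^1 ∫_{-1}^1 (1-u²)^{(d-2)/2} · 2(c-u)/(1-2cu+c²) du dc|. Then there is a constant C > 0 (depending only on d) such that D(s,t) ≤ C (t - s) for all 0 ≤ s ≤ t. -/

import Mathlib

open Real Set MeasureTheory

/-- a.e. on `Ι (-1) 1`, points lie in the open interval `Ioo (-1) 1`. -/
lemma ae_mem_Ioo_aux :
    ∀ᵐ u ∂(volume.restrict (Set.uIoc (-1:ℝ) 1)), u ∈ Set.Ioo (-1:ℝ) 1 := by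
  have h1 : ∀ᵐ (u : ℝ) ∂volume, u ≠ 1 := by
    rw [ae_iff]
    have : {u : ℝ | ¬ u ≠ 1} = {1} := by ext x; simp
    rw [this]
    exact Real.volume_singleton
  have h1' := ae_restrict_of_ae (μ := volume) (s := Set.uIoc (-1:ℝ) 1) h1
  have h2 := ae_restrict_mem (μ := volume) (measurableSet_uIoc (a := (-1:ℝ)) (b := 1))
  filter_upwards [h1', h2] with u hu1 hu2
  rw [Set.uIoc_of_le (by norm_num : (-1:ℝ) ≤ 1)] at hu2
  exact ⟨hu2.1, lt_of_le_of_ne hu2.2 hu1⟩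

/-- Key pointwise estimate. -/
lemma key_bound (e c u : ℝ) (hu : u ∈ Set.Ioo (-1:ℝ) 1) :
    |(1 - u^2) ^ e * (2*(c-u)/(1-2*c*u+c^2))| ≤ (1 - u^2) ^ (e - 1/2) := by
  obtain ⟨hu1, hu2⟩ := hu
  have hy : 0 < 1 - u^2 := by nlinarith
  have hD : 1 - 2*c*u + c^2 = (c-u)^2 + (1 - u^2) := by ring
  have hDpos : 0 < 1 - 2*c*u + c^2 := by rw [hD]; positivity
  have hsq : 0 < Real.sqrt (1 - u^2) := Real.sqrt_pos.2 hy
  have h1 : |2*(c-u)/(1-2*c*u+c^2)| ≤ (1 - u^2) ^ (-(1/2) : ℝ) := by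
    have hs : (1 - u^2) ^ (-(1/2) : ℝ) = 1 / Real.sqrt (1 - u^2) := by
      rw [Real.rpow_neg hy.le, Real.sqrt_eq_rpow, one_div]
      norm_num
    rw [hs, abs_div, abs_of_pos hDpos, div_le_div_iff₀ hDpos hsq]
    have h2 := two_mul_le_add_sq |c - u| (Real.sqrt (1 - u^2))
    have h3 : |c - u| ^ 2 = (c - u) ^ 2 := sq_abs _
    have h4 : Real.sqrt (1 - u^2) ^ 2 = 1 - u^2 := Real.sq_sqrt hy.le
    have h5 : |2*(c-u)| = 2 * |c - u| := by
      rw [abs_mul]; norm_num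
    rw [h5]
    nlinarith
  have hnn : 0 ≤ (1 - u^2) ^ e := Real.rpow_nonneg hy.le e
  calc |(1 - u^2) ^ e * (2*(c-u)/(1-2*c*u+c^2))|
      = (1 - u^2) ^ e * |2*(c-u)/(1-2*c*u+c^2)| := by
        rw [abs_mul, abs_of_nonneg hnn]
    _ ≤ (1 - u^2) ^ e * ((1 - u^2) ^ (-(1/2) : ℝ)) :=
        mul_le_mul_of_nonneg_left h1 hnn
    _ = (1 - u^2) ^ (e - 1/2) := by
        rw [← Real.rpow_add hy]; ring_nf

/-- Integrability of `(1-u²)^r` on `[-1,1]` for `r > -1`. -/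
lemma integrable_aux (r : ℝ) (hr : -1 < r) :
    IntervalIntegrable (fun u => (1 - u^2) ^ r) volume (-1) 1 := by
  set M : ℝ := max 1 ((2:ℝ) ^ r) with hM
  have hM1 : (1:ℝ) ≤ M := le_max_left _ _
  have hM2 : (2:ℝ) ^ r ≤ M := le_max_right _ _
  have hM0 : 0 ≤ M := le_trans zero_le_one hM1
  -- the dominating function
  have hB : IntervalIntegrable (fun u => M * ((1-u) ^ r + (1+u) ^ r)) volume (-1) 1 := by
    have h1 : IntervalIntegrable (fun x : ℝ => x ^ r) volume 0 2 :=
      intervalIntegral.intervalIntegrable_rpow' hr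
    have h2 : IntervalIntegrable (fun u : ℝ => (1 - u) ^ r) volume (-1) 1 := by
      have := h1.comp_sub_left 1
      norm_num at this
      exact this.symm
    have h3 : IntervalIntegrable (fun u : ℝ => (1 + u) ^ r) volume (-1) 1 := by
      have := h1.comp_add_left 1
      norm_num at this
      exact this
    exact ((h2.add h3).const_mul M)
  refine hB.mono_fun' ?_ ?_
  · apply Measurable.aestronglyMeasurable
    measurability
  · filter_upwards [ae_mem_Ioo_aux] with u hu
    obtain ⟨hu1, hu2⟩ := hu
    have hy : 0 < 1 - u^2 := by nlinarith
    have ha : 0 < 1 - u := by linarith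
    have hb : 0 < 1 + u := by linarith
    have hfac : (1 - u^2) ^ r = (1-u) ^ r * (1+u) ^ r := by
      rw [← Real.mul_rpow ha.le hb.le]; ring_nf
    have hna : 0 ≤ (1-u) ^ r := Real.rpow_nonneg ha.le r
    have hnb : 0 ≤ (1+u) ^ r := Real.rpow_nonneg hb.le r
    simp only [Real.norm_eq_abs]
    rw [abs_of_nonneg (Real.rpow_nonneg hy.le r), hfac]
    rcases le_or_gt 0 r with hr0 | hr0
    · have h4 : (1-u) ^ r ≤ (2:ℝ) ^ r :=
        Real.rpow_le_rpow ha.le (by linarith) hr0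
      calc (1-u) ^ r * (1+u) ^ r ≤ (2:ℝ) ^ r * (1+u) ^ r :=
            mul_le_mul_of_nonneg_right h4 hnb
        _ ≤ M * (1+u) ^ r := mul_le_mul_of_nonneg_right hM2 hnb
        _ ≤ M * ((1-u) ^ r + (1+u) ^ r) := by nlinarith
    · rcases le_or_gt 0 u with hu0 | hu0
      · have h4 : (1+u) ^ r ≤ 1 :=
          Real.rpow_le_one_of_one_le_of_nonpos (by linarith) hr0.le
        calc (1-u) ^ r * (1+u) ^ r ≤ (1-u) ^ r * 1 :=
              mul_le_mul_of_nonneg_left h4 hna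
          _ = (1-u) ^ r := mul_one _
          _ ≤ M * ((1-u) ^ r + (1+u) ^ r) := by nlinarith
      · have h4 : (1-u) ^ r ≤ 1 :=
          Real.rpow_le_one_of_one_le_of_nonpos (by linarith) hr0.le
        calc (1-u) ^ r * (1+u) ^ r ≤ 1 * (1+u) ^ r :=
              mul_le_mul_of_nonneg_right h4 hnb
          _ = (1+u) ^ r := one_mul _
          _ ≤ M * ((1-u) ^ r + (1+u) ^ r) := by nlinarith

theorem stmt14 (d : ℕ) (hd : 2 ≤ d) :
    ∃ C > (0:ℝ), ∀ s t : ℝ, 0 ≤ s → s ≤ t →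
      |∫ c in Real.exp (-(t-s))..1, ∫ u in (-1:ℝ)..1,
          (1 - u^2) ^ (((d:ℝ)-2)/2) * (2*(c-u)/(1-2*c*u+c^2))| ≤ C * (t - s) := by
  set r : ℝ := ((d:ℝ)-2)/2 - 1/2 with hrdef
  have hr : -1 < r := by
    have : (2:ℝ) ≤ (d:ℝ) := by exact_mod_cast hd
    rw [hrdef]; linarith
  set K : ℝ := ∫ u in (-1:ℝ)..1, (1 - u^2) ^ r with hK
  have hKnn : 0 ≤ K := by
    rw [hK]
    apply intervalIntegral.integral_nonneg (by norm_num : (-1:ℝ) ≤ 1)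
    intro u hu
    have : 0 ≤ 1 - u ^ 2 := by
      obtain ⟨h1, h2⟩ := hu
      nlinarith
    exact Real.rpow_nonneg this r
  refine ⟨K + 1, by linarith, ?_⟩
  intro s t hs hst
  set a : ℝ := t - s with ha
  have ha0 : 0 ≤ a := by linarith
  have hb1 : Real.exp (-a) ≤ 1 := Real.exp_le_one_iff.2 (by linarith)
  -- inner integral bound
  have hinner : ∀ c : ℝ, ‖∫ u in (-1:ℝ)..1,
      (1 - u^2) ^ (((d:ℝ)-2)/2) * (2*(c-u)/(1-2*c*u+c^2))‖ ≤ K := by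
    intro c
    have h := intervalIntegral.norm_integral_le_abs_of_norm_le
      (f := fun u => (1 - u^2) ^ (((d:ℝ)-2)/2) * (2*(c-u)/(1-2*c*u+c^2)))
      (g := fun u => (1 - u^2) ^ r) (μ := volume) (a := (-1:ℝ)) (b := 1)
      ?_ (integrable_aux r hr)
    · rw [← hK, abs_of_nonneg hKnn] at h
      exact h
    · filter_upwards [ae_mem_Ioo_aux] with u hu
      rw [Real.norm_eq_abs, hrdef]
      exact key_bound (((d:ℝ)-2)/2) c u hu
  have houter := intervalIntegral.norm_integral_le_of_norm_le_const
    (a := Real.exp (-a)) (b := 1) (C := K)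
    (f := fun c => ∫ u in (-1:ℝ)..1,
      (1 - u^2) ^ (((d:ℝ)-2)/2) * (2*(c-u)/(1-2*c*u+c^2)))
    (fun c _ => hinner c)
  rw [Real.norm_eq_abs] at houter
  have hexp : |1 - Real.exp (-a)| ≤ a := by
    rw [abs_of_nonneg (by linarith)]
    have := Real.add_one_le_exp (-a)
    linarith
  calc |∫ c in Real.exp (-(t-s))..1, ∫ u in (-1:ℝ)..1,
          (1 - u^2) ^ (((d:ℝ)-2)/2) * (2*(c-u)/(1-2*c*u+c^2))|
      ≤ K * |1 - Real.exp (-a)| := by rw [ha] at houter ⊢; exact houter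
    _ ≤ K * a := mul_le_mul_of_nonneg_left hexp hKnn
    _ ≤ (K + 1) * (t - s) := by rw [ha]; nlinarith
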